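/- (a) For an object V of C, v ∈ V and φ ∈ V^du define g_{φv}: U(g) → F by g_{φv}(x) := φ(x_V v). Then F[U(g)] := {g_{φv} : φ ∈ V^du, v ∈ V, V an object of C} is a subalgebra of the convolution algebra U(g)* containing the counit ε, and it is invariant under the action of U(g)^op ⊗ U(g) on U(g)* given by (π(a⊗b)h)(x) := h(axb). (b) If the pair C, C^du is good for integrating g, then the map Ψ: F[M] → F[U(g)] defined by Ψ(f)(x) := evaluation at 1 ∈ M of the function m ↦ f computed via the U(g)-action (explicitly, Ψ(f_{φv}) = g_{φv} for all φ ∈ V^du, v ∈ V, V an object of C) is a well-defined isomorphism of algebras which is equivariant for the U(g)^op ⊗ U(g)-actions, where U(g) ⊆ U(Lie(M)) acts on F[M] by π(x⊗y)f_{φv} = f_{(x_V)^du φ, y_V v}. -/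

import Mathlib

open TensorProduct

attribute [local instance 100] LieRing.ofAssociativeRing

universe u v w

/-- The data of a (full sub)category `C` of `g`-modules together with a category of duals:
an index type `ι`, for each index a `g`-module `V i`, and a chosen point-separating
subspace `du i` of the full linear dual of `V i`. -/
structure TannakaSetting (F : Type u) [Field F] (g : Type v) [LieRing g] [LieAlgebra F g] where
  ι : Type w
  V : ι → Type w
  [iAdd : ∀ i, AddCommGroup (V i)]
  [iMod : ∀ i, Module F (V i)]
  ρ : ∀ i, g →ₗ⁅F⁆ Module.End F (V i)
  du : ∀ i, Submodule F (Module.Dual F (V i))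

attribute [instance] TannakaSetting.iAdd TannakaSetting.iMod

namespace TannakaSetting

variable {F : Type u} [Field F] {g : Type v} [LieRing g] [LieAlgebra F g]
variable (D : TannakaSetting F g)

/-- `g`-equivariant linear maps between objects of the category. -/
def IsHom {i j : D.ι} (f : D.V i →ₗ[F] D.V j) : Prop :=
  ∀ x : g, f ∘ₗ (D.ρ i x : Module.End F (D.V i)) = (D.ρ j x : Module.End F (D.V j)) ∘ₗ f

/-- An endomorphism of `V i` lies in `End_{V^du}(V)`, i.e. its transpose preserves
the chosen dual subspace. -/
def PreservesDu (i : D.ι) (f : Module.End F (D.V i)) : Prop :=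
  ∀ φ ∈ D.du i, f.dualMap φ ∈ D.du i

/-- The action of `x ∈ g` on a tensor product of two objects. -/
noncomputable def tensorρ (i j : D.ι) (x : g) : Module.End F (D.V i ⊗[F] D.V j) :=
  TensorProduct.map (D.ρ i x) LinearMap.id + TensorProduct.map LinearMap.id (D.ρ j x)

/-- `e` realizes `V k` as a tensor product of the `g`-modules `V i` and `V j`. -/
def IsTensorProd (i j k : D.ι) (e : D.V k ≃ₗ[F] (D.V i ⊗[F] D.V j)) : Prop :=
  ∀ x : g, e.toLinearMap ∘ₗ (D.ρ k x : Module.End F (D.V k)) = D.tensorρ i j x ∘ₗ e.toLinearMap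

/-- `e` realizes `V k` as a direct sum of the `g`-modules `V i` and `V j`. -/
def IsSumProd (i j k : D.ι) (e : D.V k ≃ₗ[F] (D.V i × D.V j)) : Prop :=
  ∀ x : g, e.toLinearMap ∘ₗ (D.ρ k x : Module.End F (D.V k)) =
    ((D.ρ i x : Module.End F (D.V i)).prodMap (D.ρ j x : Module.End F (D.V j))) ∘ₗ e.toLinearMap

/-- `V i` is a one-dimensional trivial `g`-module. -/
def IsTrivOneDim (i : D.ι) : Prop :=
  Module.finrank F (D.V i) = 1 ∧ ∀ x : g, (D.ρ i x : Module.End F (D.V i)) = 0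

/-- The functional `φ ⊗ ψ` on a tensor product. -/
noncomputable def tensorDual {i j : D.ι} (φ : Module.Dual F (D.V i))
    (ψ : Module.Dual F (D.V j)) : Module.Dual F (D.V i ⊗[F] D.V j) :=
  TensorProduct.dualDistrib F (D.V i) (D.V j) (φ ⊗ₜ[F] ψ)

/-- The axioms on the pair of categories `C`, `C^du`:
`C` is closed under isomorphism, (binary) direct sums, tensor products, submodules,
contains a one-dimensional trivial module, `g` acts faithfully, and the duals separate points,
are stable under the transposed `g`-action and under transposes of morphisms, and are compatible
with direct sums and tensor products. -/
structure IsGoodSetting : Prop where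
  separating : ∀ (i : D.ι) (v : D.V i), v ≠ 0 → ∃ φ ∈ D.du i, φ v ≠ 0
  du_g : ∀ (i : D.ι) (x : g), D.PreservesDu i (D.ρ i x)
  du_hom : ∀ (i j : D.ι) (f : D.V i →ₗ[F] D.V j), D.IsHom f →
    ∀ ψ ∈ D.du j, f.dualMap ψ ∈ D.du i
  faithful : ∀ x : g, (∀ i, (D.ρ i x : Module.End F (D.V i)) = 0) → x = 0
  exists_triv : ∃ i, D.IsTrivOneDim i
  exists_sum : ∀ i j : D.ι, ∃ (k : D.ι) (e : D.V k ≃ₗ[F] (D.V i × D.V j)), D.IsSumProd i j k e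
  exists_tensor : ∀ i j : D.ι,
    ∃ (k : D.ι) (e : D.V k ≃ₗ[F] (D.V i ⊗[F] D.V j)), D.IsTensorProd i j k e
  du_tensor : ∀ (i j k : D.ι) (e : D.V k ≃ₗ[F] (D.V i ⊗[F] D.V j)), D.IsTensorProd i j k e →
    ∀ φ ∈ D.du i, ∀ ψ ∈ D.du j, e.toLinearMap.dualMap (D.tensorDual φ ψ) ∈ D.du k
  du_sum : ∀ (i j k : D.ι) (e : D.V k ≃ₗ[F] (D.V i × D.V j)), D.IsSumProd i j k e →
    ∀ ξ : Module.Dual F (D.V k), ξ ∈ D.du k ↔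
      ∃ φ ∈ D.du i, ∃ ψ ∈ D.du j,
        ξ = e.toLinearMap.dualMap
          ((LinearMap.fst F (D.V i) (D.V j)).dualMap φ +
            (LinearMap.snd F (D.V i) (D.V j)).dualMap ψ)
  submod_closed : ∀ (i : D.ι) (U : Submodule F (D.V i)), (∀ x : g, ∀ u ∈ U, D.ρ i x u ∈ U) →
    ∃ (k : D.ι) (e : D.V k ≃ₗ[F] ↥U), ∀ (x : g) (v : D.V k),
      (↑(e ((D.ρ k x) v)) : D.V i) = D.ρ i x ↑(e v)
  isoClosed : ∀ (W : Type w) [AddCommGroup W] [Module F W] (ρW : g →ₗ⁅F⁆ Module.End F W)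
    (i : D.ι) (e : D.V i ≃ₗ[F] W), (∀ (x : g) (v : D.V i), e (D.ρ i x v) = ρW x (e v)) →
    ∃ (k : D.ι) (e' : D.V k ≃ₗ[F] W), ∀ (x : g) (v : D.V k), e' (D.ρ k x v) = ρW x (e' v)

/-- The algebra `Nat` of natural transformations: families of endomorphisms
`m i ∈ End_{V^du}(V i)` commuting with all `g`-equivariant maps between objects. -/
def NatAlg : Set (∀ i, Module.End F (D.V i)) :=
  { m | (∀ i, D.PreservesDu i (m i)) ∧
        ∀ (i j : D.ι) (f : D.V i →ₗ[F] D.V j), D.IsHom f → f ∘ₗ m i = m j ∘ₗ f }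

/-- The Tannaka monoid `M`: natural transformations compatible with tensor products and
acting as the identity on trivial one-dimensional modules. -/
def M : Set (∀ i, Module.End F (D.V i)) :=
  { m | m ∈ D.NatAlg ∧
        (∀ (i j k : D.ι) (e : D.V k ≃ₗ[F] (D.V i ⊗[F] D.V j)), D.IsTensorProd i j k e →
          e.toLinearMap ∘ₗ m k = TensorProduct.map (m i) (m j) ∘ₗ e.toLinearMap) ∧
        (∀ i, D.IsTrivOneDim i → m i = 1) }

/-- The matrix coefficient `f_{φ v}` as a function on the Tannaka monoid `M`. -/
def matCoef (i : D.ι) (φ : Module.Dual F (D.V i)) (v : D.V i) : ↥D.M → F :=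
  fun m => φ (m.1 i v)

/-- The coordinate ring `F[M]` of matrix coefficients (a set of functions on `M`). -/
def coordRing : Set (↥D.M → F) :=
  { f | ∃ (i : D.ι) (φ : Module.Dual F (D.V i)) (v : D.V i), φ ∈ D.du i ∧ f = D.matCoef i φ v }

/-- The Lie algebra `Lie(M)` of the Tannaka monoid. -/
def LieM : Set (∀ i, Module.End F (D.V i)) :=
  { x | x ∈ D.NatAlg ∧
        (∀ (i j k : D.ι) (e : D.V k ≃ₗ[F] (D.V i ⊗[F] D.V j)), D.IsTensorProd i j k e →
          e.toLinearMap ∘ₗ x k =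
            (TensorProduct.map (x i) LinearMap.id +
              TensorProduct.map LinearMap.id (x j)) ∘ₗ e.toLinearMap) ∧
        (∀ i, D.IsTrivOneDim i → x i = 0) ∧
        (∃ δ : (↥D.M → F) → F, ∀ (i : D.ι) (φ : Module.Dual F (D.V i)) (v : D.V i),
          φ ∈ D.du i → δ (D.matCoef i φ v) = φ (x i v)) }

/-- The Lie algebra `Lie(N)` of a submonoid `N ⊆ M`: those `x ∈ Lie(M)` whose derivation
`δ_x` annihilates the vanishing ideal `I(N) ⊆ F[M]`. -/
def LieOf (N : Set (↥D.M)) : Set (∀ i, Module.End F (D.V i)) :=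
  { x | x ∈ D.LieM ∧ ∀ (i : D.ι) (φ : Module.Dual F (D.V i)) (v : D.V i), φ ∈ D.du i →
      (∀ n ∈ N, D.matCoef i φ v n = 0) → φ (x i v) = 0 }

/-- The unit group `M^×` of the Tannaka monoid, as a subset of `M`. -/
def unitsSet : Set (↥D.M) :=
  { m | ∃ n : ↥D.M, m.1 * n.1 = 1 ∧ n.1 * m.1 = 1 }

/-- The pair `C`, `C^du` is good for integrating `g`: `g ⊆ Lie(M)`. -/
def Good : Prop := ∀ x : g, (fun i => (D.ρ i x : Module.End F (D.V i))) ∈ D.LieM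

/-- The pair `C`, `C^du` is very good for integrating `g`: `g ⊆ Lie(M^×)`. -/
def VeryGood : Prop :=
  ∀ x : g, (fun i => (D.ρ i x : Module.End F (D.V i))) ∈ D.LieOf D.unitsSet

/-- A subset `S ⊆ M` is Zariski dense in `M`. -/
def DenseIn (S : Set (↥D.M)) : Prop :=
  ∀ f ∈ D.coordRing, (∀ m ∈ S, f m = 0) → ∀ m, f m = 0

theorem one_mem_M : (1 : ∀ i, Module.End F (D.V i)) ∈ D.M := by
  refine ⟨⟨?_, ?_⟩, ?_, ?_⟩
  · intro i φ hφ
    first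
      | simpa [Module.End.one_eq_id] using hφ
      | exact hφ
  · intro i j f _
    ext v
    simp
  · intro i j k e _
    ext v
    simp [TensorProduct.map_one]
  · intro i _
    rfl

/-- The unit of the Tannaka monoid as an element of the subtype `↥M`. -/
def oneM : ↥D.M := ⟨1, D.one_mem_M⟩

end TannakaSetting

open TensorProduct

namespace TannakaSetting

variable {F : Type u} [Field F] {g : Type v} [LieRing g] [LieAlgebra F g]
variable (D : TannakaSetting F g)

/-- The action of the universal enveloping algebra `U(g)` on the object `V i`. -/
noncomputable def uact (i : D.ι) :
    UniversalEnvelopingAlgebra F g →ₐ[F] Module.End F (D.V i) :=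
  UniversalEnvelopingAlgebra.lift F (D.ρ i)

/-- The matrix coefficient `g_{φ v}` on `U(g)`, `g_{φ v}(a) = φ (a_V v)`. -/
noncomputable def uMatCoef (i : D.ι) (φ : Module.Dual F (D.V i)) (v : D.V i) :
    Module.Dual F (UniversalEnvelopingAlgebra F g) where
  toFun a := φ (D.uact i a v)
  map_add' a b := by simp [map_add, LinearMap.add_apply]
  map_smul' c a := by
    show φ (D.uact i (c • a) v) = c • φ (D.uact i a v)
    rw [map_smul]
    simp

/-- The algebra of matrix coefficients `F[U(g)] ⊆ U(g)*`. -/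
noncomputable def uCoordRing : Set (Module.Dual F (UniversalEnvelopingAlgebra F g)) :=
  { h | ∃ (i : D.ι) (φ : Module.Dual F (D.V i)) (v : D.V i),
      φ ∈ D.du i ∧ h = D.uMatCoef i φ v }

end TannakaSetting

variable {F : Type u} [Field F] [CharZero F] {g : Type v} [LieRing g] [LieAlgebra F g]

namespace TannakaSetting

variable (D : TannakaSetting F g)

/-- Induction principle for the universal enveloping algebra. -/
theorem aux_uea_induction {C : UniversalEnvelopingAlgebra F g → Prop}
    (halg : ∀ r : F, C (algebraMap F (UniversalEnvelopingAlgebra F g) r))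
    (hι : ∀ x : g, C (UniversalEnvelopingAlgebra.ι F x))
    (hmul : ∀ a b, C a → C b → C (a * b))
    (hadd : ∀ a b, C a → C b → C (a + b)) (a : UniversalEnvelopingAlgebra F g) : C a := by
  obtain ⟨t, rfl⟩ := RingCon.mkₐ_surjective (α := F) (UniversalEnvelopingAlgebra.ringCon F g) a
  induction t using TensorAlgebra.induction with
  | algebraMap r => rw [AlgHom.commutes]; exact halg r
  | ι x => exact hι x
  | mul a b ha hb => rw [map_mul]; exact hmul _ _ ha hb
  | add a b ha hb => rw [map_add]; exact hadd _ _ ha hb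

theorem aux_uact_ι (i : D.ι) (x : g) :
    D.uact i (UniversalEnvelopingAlgebra.ι F x) = D.ρ i x := by
  simp [uact]

theorem aux_du_mul (i : D.ι) {f h : Module.End F (D.V i)} (hf : D.PreservesDu i f)
    (hh : D.PreservesDu i h) : D.PreservesDu i (f * h) := fun φ hφ => by
  have : (f * h).dualMap φ = h.dualMap (f.dualMap φ) := by ext v; rfl
  rw [this]; exact hh _ (hf _ hφ)

theorem aux_uact_du (HG : D.IsGoodSetting) (i : D.ι) (a : UniversalEnvelopingAlgebra F g) :
    D.PreservesDu i (D.uact i a) := by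
  induction a using aux_uea_induction with
  | halg r =>
    intro φ hφ
    have h1 : (D.uact i (algebraMap F _ r)).dualMap φ = r • φ := by
      rw [AlgHom.commutes]; ext v; simp [Module.algebraMap_end_apply]
    rw [h1]; exact (D.du i).smul_mem r hφ
  | hι x => rw [D.aux_uact_ι]; exact HG.du_g i x
  | hmul a b ha hb => rw [map_mul]; exact D.aux_du_mul i ha hb
  | hadd a b ha hb =>
    intro φ hφ
    have h1 : (D.uact i (a + b)).dualMap φ
        = (D.uact i a).dualMap φ + (D.uact i b).dualMap φ := by
      rw [map_add]; ext v; simp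
    rw [h1]; exact (D.du i).add_mem (ha φ hφ) (hb φ hφ)

theorem aux_uact_sum {i j k : D.ι} {e : D.V k ≃ₗ[F] (D.V i × D.V j)}
    (he : D.IsSumProd i j k e) (a : UniversalEnvelopingAlgebra F g) (t : D.V k) :
    e (D.uact k a t) = (D.uact i a (e t).1, D.uact j a (e t).2) := by
  induction a using aux_uea_induction generalizing t with
  | halg r =>
    simp only [AlgHom.commutes, Module.algebraMap_end_apply, map_smul]
    rfl
  | hι x =>
    have h0 := LinearMap.congr_fun (he x) t
    simp only [LinearMap.comp_apply, LinearEquiv.coe_coe, LinearMap.prodMap_apply] at h0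
    rw [D.aux_uact_ι k x, D.aux_uact_ι i x, D.aux_uact_ι j x]
    exact h0
  | hmul a b ha hb =>
    rw [map_mul, map_mul, map_mul]
    simp only [Module.End.mul_apply]
    rw [ha, hb]
  | hadd a b ha hb =>
    rw [map_add, map_add, map_add]
    simp only [LinearMap.add_apply, map_add, Prod.mk_add_mk, ha, hb]

theorem aux_nat_sum {i j k : D.ι} {e : D.V k ≃ₗ[F] (D.V i × D.V j)}
    (he : D.IsSumProd i j k e) (m : ↥D.M) (t : D.V k) :
    e (m.1 k t) = (m.1 i (e t).1, m.1 j (e t).2) := by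
  have h1 : D.IsHom ((LinearMap.fst F (D.V i) (D.V j)) ∘ₗ e.toLinearMap) := by
    intro x
    rw [LinearMap.comp_assoc, he x]
    ext t'; rfl
  have h2 : D.IsHom ((LinearMap.snd F (D.V i) (D.V j)) ∘ₗ e.toLinearMap) := by
    intro x
    rw [LinearMap.comp_assoc, he x]
    ext t'; rfl
  have n1 := LinearMap.congr_fun (m.2.1.2 k i _ h1) t
  have n2 := LinearMap.congr_fun (m.2.1.2 k j _ h2) t
  simp only [LinearMap.comp_apply, LinearEquiv.coe_coe, LinearMap.fst_apply,
    LinearMap.snd_apply] at n1 n2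
  exact Prod.ext n1 n2

/-- The sum of two matrix coefficients is a matrix coefficient (on `M` and on `U(g)`). -/
theorem aux_sum_mat {i j k : D.ι} {e : D.V k ≃ₗ[F] (D.V i × D.V j)}
    (he : D.IsSumProd i j k e) (φ : Module.Dual F (D.V i)) (ψ : Module.Dual F (D.V j))
    (v : D.V i) (w : D.V j) :
    D.matCoef k (e.toLinearMap.dualMap ((LinearMap.fst F (D.V i) (D.V j)).dualMap φ +
        (LinearMap.snd F (D.V i) (D.V j)).dualMap ψ)) (e.symm (v, w)) =
      D.matCoef i φ v + D.matCoef j ψ w ∧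
    D.uMatCoef k (e.toLinearMap.dualMap ((LinearMap.fst F (D.V i) (D.V j)).dualMap φ +
        (LinearMap.snd F (D.V i) (D.V j)).dualMap ψ)) (e.symm (v, w)) =
      D.uMatCoef i φ v + D.uMatCoef j ψ w := by
  constructor
  · funext m
    have h1 := D.aux_nat_sum he m (e.symm (v, w))
    simp only [LinearEquiv.apply_symm_apply] at h1
    simp [matCoef, h1]
  · ext a
    have h1 := D.aux_uact_sum he a (e.symm (v, w))
    simp only [LinearEquiv.apply_symm_apply] at h1
    simp [uMatCoef, h1]

theorem aux_equiv (i : D.ι) (φ : Module.Dual F (D.V i)) (v : D.V i)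
    (a b : UniversalEnvelopingAlgebra F g) :
    D.uMatCoef i ((D.uact i a).dualMap φ) (D.uact i b v) =
      (D.uMatCoef i φ v) ∘ₗ ((LinearMap.mulLeft F a) ∘ₗ (LinearMap.mulRight F b)) := by
  ext c
  show φ (D.uact i a (D.uact i c (D.uact i b v))) = φ (D.uact i (a * (c * b)) v)
  rw [map_mul, map_mul]
  rfl

theorem aux_mul_mem {m n : ∀ i, Module.End F (D.V i)} (hm : m ∈ D.M) (hn : n ∈ D.M) :
    (fun i => m i * n i) ∈ D.M := by
  obtain ⟨⟨hm1, hm2⟩, hm3, hm4⟩ := hm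
  obtain ⟨⟨hn1, hn2⟩, hn3, hn4⟩ := hn
  refine ⟨⟨fun i => D.aux_du_mul i (hm1 i) (hn1 i), fun i j f hf => ?_⟩,
    fun i j k e he => ?_, fun i hi => ?_⟩
  · calc f ∘ₗ (m i * n i) = (f ∘ₗ m i) ∘ₗ n i := by ext v; rfl
      _ = (m j ∘ₗ f) ∘ₗ n i := by rw [hm2 i j f hf]
      _ = m j ∘ₗ (f ∘ₗ n i) := by ext v; rfl
      _ = m j ∘ₗ (n j ∘ₗ f) := by rw [hn2 i j f hf]
      _ = (m j * n j) ∘ₗ f := by ext v; rfl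
  · calc e.toLinearMap ∘ₗ (m k * n k) = (e.toLinearMap ∘ₗ m k) ∘ₗ n k := by ext v; rfl
      _ = (TensorProduct.map (m i) (m j) ∘ₗ e.toLinearMap) ∘ₗ n k := by rw [hm3 i j k e he]
      _ = TensorProduct.map (m i) (m j) ∘ₗ (e.toLinearMap ∘ₗ n k) := by ext v; rfl
      _ = TensorProduct.map (m i) (m j) ∘ₗ (TensorProduct.map (n i) (n j) ∘ₗ e.toLinearMap) := by
            rw [hn3 i j k e he]
      _ = TensorProduct.map (m i * n i) (m j * n j) ∘ₗ e.toLinearMap := by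
            rw [← LinearMap.comp_assoc, ← TensorProduct.map_comp]; rfl
  · show m i * n i = 1
    rw [hm4 i hi, hn4 i hi, one_mul]

theorem aux_triv_uact {i : D.ι} (hi : D.IsTrivOneDim i)
    (ε : UniversalEnvelopingAlgebra F g →ₐ[F] F)
    (hε : ∀ x : g, ε (UniversalEnvelopingAlgebra.ι F x) = 0)
    (a : UniversalEnvelopingAlgebra F g) (t : D.V i) : D.uact i a t = ε a • t := by
  induction a using aux_uea_induction generalizing t with
  | halg r => simp [AlgHom.commutes, Module.algebraMap_end_apply]
  | hι x => rw [D.aux_uact_ι, hi.2 x, hε x]; simp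
  | hmul a b ha hb =>
    rw [map_mul, map_mul, Module.End.mul_apply, hb, map_smul, ha, smul_smul, mul_comm]
  | hadd a b ha hb =>
    rw [map_add, map_add, LinearMap.add_apply, ha, hb, add_smul]

theorem aux_triv_vec (HG : D.IsGoodSetting) {i : D.ι} (hi : D.IsTrivOneDim i) :
    ∃ φ₀ ∈ D.du i, ∃ v₀ : D.V i, φ₀ v₀ = 1 := by
  have h1 : Nontrivial (D.V i) := by
    by_contra hcon
    rw [not_nontrivial_iff_subsingleton] at hcon
    have := Module.finrank_zero_of_subsingleton (R := F) (M := D.V i)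
    rw [hi.1] at this
    exact one_ne_zero this
  obtain ⟨v, hv⟩ := exists_ne (0 : D.V i)
  obtain ⟨φ, hφ, hne⟩ := HG.separating i v hv
  exact ⟨(φ v)⁻¹ • φ, (D.du i).smul_mem _ hφ, v, by
    simp [inv_mul_cancel₀ hne]⟩

theorem aux_eps (HG : D.IsGoodSetting) (ε : UniversalEnvelopingAlgebra F g →ₐ[F] F)
    (hε : ∀ x : g, ε (UniversalEnvelopingAlgebra.ι F x) = 0) :
    ∃ (i : D.ι) (φ : Module.Dual F (D.V i)) (v : D.V i), φ ∈ D.du i ∧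
      (∀ m : ↥D.M, D.matCoef i φ v m = 1) ∧ D.uMatCoef i φ v = ε.toLinearMap := by
  obtain ⟨i, hi⟩ := HG.exists_triv
  obtain ⟨φ₀, hφ₀, v₀, h1⟩ := D.aux_triv_vec HG hi
  refine ⟨i, φ₀, v₀, hφ₀, fun m => ?_, ?_⟩
  · have h2 := m.2.2.2 i hi
    simp [matCoef, h2, h1]
  · ext a
    show φ₀ (D.uact i a v₀) = ε a
    rw [D.aux_triv_uact hi ε hε, map_smul, h1, smul_eq_mul, mul_one]

theorem aux_ATM_map_eq {M N : Type w} [AddCommGroup M] [Module F M] [AddCommGroup N]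
    [Module F N] (f : Module.End F M) (h : Module.End F N) :
    Module.endTensorEndAlgHom (R := F) (S := F) (A := F) (f ⊗ₜ[F] h)
      = TensorProduct.map f h := by
  apply TensorProduct.ext'
  intro m n
  rfl

theorem aux_uact_tensor
    (Δ : UniversalEnvelopingAlgebra F g →ₐ[F]
      (UniversalEnvelopingAlgebra F g ⊗[F] UniversalEnvelopingAlgebra F g))
    (hΔ : ∀ x : g, Δ (UniversalEnvelopingAlgebra.ι F x) =
      1 ⊗ₜ[F] (UniversalEnvelopingAlgebra.ι F x) + (UniversalEnvelopingAlgebra.ι F x) ⊗ₜ[F] 1)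
    {i j k : D.ι} {e : D.V k ≃ₗ[F] (D.V i ⊗[F] D.V j)}
    (he : D.IsTensorProd i j k e) (a : UniversalEnvelopingAlgebra F g) (t : D.V k) :
    e (D.uact k a t) =
      (Module.endTensorEndAlgHom (R := F) (S := F) (A := F)
        ((Algebra.TensorProduct.map (D.uact i) (D.uact j)) (Δ a))) (e t) := by
  induction a using aux_uea_induction generalizing t with
  | halg r =>
    simp only [AlgHom.commutes, Module.algebraMap_end_apply, map_smul]
  | hι x =>
    have h0 := LinearMap.congr_fun (he x) t
    simp only [LinearMap.comp_apply, LinearEquiv.coe_coe, tensorρ,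
      LinearMap.add_apply] at h0
    rw [D.aux_uact_ι k x, hΔ x]
    rw [map_add, map_add]
    simp only [Algebra.TensorProduct.map_tmul, map_one, D.aux_uact_ι,
      aux_ATM_map_eq, LinearMap.add_apply]
    rw [h0]
    have e1 : TensorProduct.map (1 : Module.End F (D.V i)) ((D.ρ j) x)
        = TensorProduct.map LinearMap.id ((D.ρ j) x) := rfl
    have e2 : TensorProduct.map ((D.ρ i) x) (1 : Module.End F (D.V j))
        = TensorProduct.map ((D.ρ i) x) LinearMap.id := rfl
    rw [e1, e2, add_comm]
  | hmul a b ha hb =>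
    rw [map_mul, map_mul, map_mul, map_mul]
    simp only [Module.End.mul_apply]
    rw [ha, hb]
  | hadd a b ha hb =>
    rw [map_add, map_add, map_add, map_add]
    simp only [LinearMap.add_apply, map_add, ha, hb]

theorem aux_dualDistrib (i j : D.ι) (φ : Module.Dual F (D.V i)) (ψ : Module.Dual F (D.V j))
    (v : D.V i) (w : D.V j)
    (t : UniversalEnvelopingAlgebra F g ⊗[F] UniversalEnvelopingAlgebra F g) :
    TensorProduct.dualDistrib F (UniversalEnvelopingAlgebra F g)
        (UniversalEnvelopingAlgebra F g) ((D.uMatCoef i φ v) ⊗ₜ[F] (D.uMatCoef j ψ w)) t =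
      D.tensorDual φ ψ
        ((Module.endTensorEndAlgHom (R := F) (S := F) (A := F)
          ((Algebra.TensorProduct.map (D.uact i) (D.uact j)) t)) (v ⊗ₜ[F] w)) := by
  induction t using TensorProduct.induction_on with
  | zero => simp
  | tmul a b =>
    simp [TensorProduct.dualDistrib_apply, tensorDual, uMatCoef,
      Algebra.TensorProduct.map_tmul, aux_ATM_map_eq]
  | add s t hs ht =>
    simp only [map_add, LinearMap.add_apply, hs, ht]

theorem aux_nat_tensor {i j k : D.ι} {e : D.V k ≃ₗ[F] (D.V i ⊗[F] D.V j)}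
    (he : D.IsTensorProd i j k e) (m : ↥D.M) (t : D.V k) :
    e (m.1 k t) = TensorProduct.map (m.1 i) (m.1 j) (e t) :=
  LinearMap.congr_fun (m.2.2.1 i j k e he) t

/-- The product of two matrix coefficients is a matrix coefficient. -/
theorem aux_tensor_mat
    (Δ : UniversalEnvelopingAlgebra F g →ₐ[F]
      (UniversalEnvelopingAlgebra F g ⊗[F] UniversalEnvelopingAlgebra F g))
    (hΔ : ∀ x : g, Δ (UniversalEnvelopingAlgebra.ι F x) =
      1 ⊗ₜ[F] (UniversalEnvelopingAlgebra.ι F x) + (UniversalEnvelopingAlgebra.ι F x) ⊗ₜ[F] 1)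
    {i j k : D.ι} {e : D.V k ≃ₗ[F] (D.V i ⊗[F] D.V j)} (he : D.IsTensorProd i j k e)
    (φ : Module.Dual F (D.V i)) (ψ : Module.Dual F (D.V j)) (v : D.V i) (w : D.V j) :
    D.matCoef k (e.toLinearMap.dualMap (D.tensorDual φ ψ)) (e.symm (v ⊗ₜ[F] w)) =
      D.matCoef i φ v * D.matCoef j ψ w ∧
    D.uMatCoef k (e.toLinearMap.dualMap (D.tensorDual φ ψ)) (e.symm (v ⊗ₜ[F] w)) =
      (TensorProduct.dualDistrib F (UniversalEnvelopingAlgebra F g)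
        (UniversalEnvelopingAlgebra F g)
        ((D.uMatCoef i φ v) ⊗ₜ[F] (D.uMatCoef j ψ w))) ∘ₗ Δ.toLinearMap := by
  constructor
  · funext m
    have h1 := D.aux_nat_tensor he m (e.symm (v ⊗ₜ[F] w))
    simp only [LinearEquiv.apply_symm_apply, TensorProduct.map_tmul] at h1
    simp [matCoef, h1, tensorDual, TensorProduct.dualDistrib_apply]
  · ext a
    have h1 := D.aux_uact_tensor Δ hΔ he a (e.symm (v ⊗ₜ[F] w))
    simp only [LinearEquiv.apply_symm_apply] at h1
    have h2 := D.aux_dualDistrib i j φ ψ v w (Δ a)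
    simp only [uMatCoef, LinearMap.coe_mk, AddHom.coe_mk, LinearMap.coe_comp,
      Function.comp_apply, AlgHom.toLinearMap_apply, LinearMap.dualMap_apply,
      LinearEquiv.coe_coe]
    rw [h1, ← h2]
    rfl

theorem aux_step (HGood : D.Good) {i j : D.ι} {φ : Module.Dual F (D.V i)}
    {ψ : Module.Dual F (D.V j)} {v : D.V i} {w : D.V j}
    (hφ : φ ∈ D.du i) (hψ : ψ ∈ D.du j)
    (h : D.matCoef i φ v = D.matCoef j ψ w) (x : g) :
    D.matCoef i φ (D.ρ i x v) = D.matCoef j ψ (D.ρ j x w) := by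
  obtain ⟨_, _, _, δ, hδ⟩ := HGood x
  funext m
  have hφ' := m.2.1.1 i φ hφ
  have hψ' := m.2.1.1 j ψ hψ
  have h1 : D.matCoef i ((m.1 i).dualMap φ) v = D.matCoef j ((m.1 j).dualMap ψ) w := by
    funext n
    have hmn := D.aux_mul_mem m.2 n.2
    have h2 := congrFun h (⟨fun i' => m.1 i' * n.1 i', hmn⟩ : ↥D.M)
    simpa [matCoef, Module.End.mul_apply] using h2
  have e1 := hδ i ((m.1 i).dualMap φ) v hφ'
  have e2 := hδ j ((m.1 j).dualMap ψ) w hψ'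
  rw [h1] at e1
  have e3 := e1.symm.trans e2
  simpa [matCoef, LinearMap.dualMap_apply] using e3

theorem aux_key (HGood : D.Good) {i j : D.ι} {φ : Module.Dual F (D.V i)}
    {ψ : Module.Dual F (D.V j)} {v : D.V i} {w : D.V j}
    (hφ : φ ∈ D.du i) (hψ : ψ ∈ D.du j)
    (h : D.matCoef i φ v = D.matCoef j ψ w) :
    D.uMatCoef i φ v = D.uMatCoef j ψ w := by
  have main : ∀ a : UniversalEnvelopingAlgebra F g, ∀ (v' : D.V i) (w' : D.V j),
      D.matCoef i φ v' = D.matCoef j ψ w' →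
      D.matCoef i φ (D.uact i a v') = D.matCoef j ψ (D.uact j a w') := by
    intro a
    induction a using aux_uea_induction with
    | halg r =>
      intro v' w' h'
      funext m
      have h2 := congrFun h' m
      simp only [matCoef, AlgHom.commutes, Module.algebraMap_end_apply, map_smul,
        smul_eq_mul] at *
      rw [h2]
    | hι x =>
      intro v' w' h'
      rw [D.aux_uact_ι, D.aux_uact_ι]
      exact D.aux_step HGood hφ hψ h' x
    | hmul a b ha hb =>
      intro v' w' h'
      rw [map_mul, map_mul]
      simp only [Module.End.mul_apply]
      exact ha _ _ (hb _ _ h')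
    | hadd a b ha hb =>
      intro v' w' h'
      funext m
      have h1 := congrFun (ha v' w' h') m
      have h2 := congrFun (hb v' w' h') m
      simp only [matCoef, map_add, LinearMap.add_apply] at *
      rw [h1, h2]
  ext a
  have h3 := congrFun (main a v w h) D.oneM
  simpa [matCoef, uMatCoef, oneM] using h3

theorem aux_inj (HG : D.IsGoodSetting) {i j : D.ι} {φ : Module.Dual F (D.V i)}
    {ψ : Module.Dual F (D.V j)} {v : D.V i} {w : D.V j}
    (h : D.uMatCoef i φ v = D.uMatCoef j ψ w) :
    D.matCoef i φ v = D.matCoef j ψ w := by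
  obtain ⟨k, e, he⟩ := HG.exists_sum i j
  set u := e.symm (v, w) with hu
  let L : UniversalEnvelopingAlgebra F g →ₗ[F] D.V k :=
    { toFun := fun a => D.uact k a u
      map_add' := fun a b => by simp [map_add]
      map_smul' := fun c a => by simp [map_smul] }
  have hstab : ∀ x : g, ∀ t ∈ LinearMap.range L, D.ρ k x t ∈ LinearMap.range L := by
    rintro x _ ⟨a, rfl⟩
    refine ⟨UniversalEnvelopingAlgebra.ι F x * a, ?_⟩
    show D.uact k (UniversalEnvelopingAlgebra.ι F x * a) u = D.ρ k x (D.uact k a u)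
    rw [map_mul, Module.End.mul_apply, D.aux_uact_ι]
  obtain ⟨k', e', hk'⟩ := HG.submod_closed k (LinearMap.range L) hstab
  have hhom : D.IsHom ((LinearMap.range L).subtype ∘ₗ e'.toLinearMap) := by
    intro x
    ext t
    exact hk' x t
  funext m
  have hnat := m.2.1.2 k' k _ hhom
  have humem : u ∈ LinearMap.range L := ⟨1, by show D.uact k 1 u = u; simp⟩
  have hmu : m.1 k u ∈ LinearMap.range L := by
    have hfix : ((LinearMap.range L).subtype ∘ₗ e'.toLinearMap) (e'.symm ⟨u, humem⟩) = u := by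
      simp
    have h4 := LinearMap.congr_fun hnat (e'.symm ⟨u, humem⟩)
    simp only [LinearMap.comp_apply] at h4 hfix
    rw [hfix] at h4
    rw [← h4]
    exact Submodule.coe_mem _
  obtain ⟨a, ha⟩ := hmu
  have h1 : e (m.1 k u) = (m.1 i v, m.1 j w) := by
    have h5 := D.aux_nat_sum he m u
    rw [hu] at h5
    simpa using h5
  have h2 : e (D.uact k a u) = (D.uact i a v, D.uact j a w) := by
    have h5 := D.aux_uact_sum he a u
    rw [hu] at h5
    simpa using h5
  have h3 : (m.1 i v, m.1 j w) = (D.uact i a v, D.uact j a w) := by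
    rw [← h1, ← h2]
    exact congrArg e ha.symm
  have h6 : D.uMatCoef i φ v a = D.uMatCoef j ψ w a := LinearMap.congr_fun h a
  have hfst : m.1 i v = D.uact i a v := congrArg Prod.fst h3
  have hsnd : m.1 j w = D.uact j a w := congrArg Prod.snd h3
  show φ (m.1 i v) = ψ (m.1 j w)
  rw [hfst, hsnd]
  exact h6

end TannakaSetting

/-- **The embedding of `F[M]` into the convolution algebra `U(g)*`.**
(a) The matrix coefficients `g_{φ v}` on `U(g)` form a subalgebra `F[U(g)]` of the convolution
algebra `U(g)*` containing the counit `ε`, invariant under the `U(g)ᵒᵖ ⊗ U(g)`-action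
`(π(a ⊗ b) h)(x) = h (a x b)`.
(b) If the pair `C`, `C^du` is good for integrating `g`, there is an algebra isomorphism
`Ψ : F[M] → F[U(g)]` with `Ψ (f_{φ v}) = g_{φ v}`, equivariant for the
`U(g)ᵒᵖ ⊗ U(g)`-actions. -/
theorem stmt_7 (D : TannakaSetting F g) (HG : D.IsGoodSetting)
    (Δ : UniversalEnvelopingAlgebra F g →ₐ[F]
      (UniversalEnvelopingAlgebra F g ⊗[F] UniversalEnvelopingAlgebra F g))
    (hΔ : ∀ x : g, Δ (UniversalEnvelopingAlgebra.ι F x) =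
      1 ⊗ₜ[F] (UniversalEnvelopingAlgebra.ι F x) + (UniversalEnvelopingAlgebra.ι F x) ⊗ₜ[F] 1)
    (ε : UniversalEnvelopingAlgebra F g →ₐ[F] F)
    (hε : ∀ x : g, ε (UniversalEnvelopingAlgebra.ι F x) = 0) :
    -- (a) `F[U(g)]` is a subalgebra of the convolution algebra `U(g)*` ...
    (ε.toLinearMap ∈ D.uCoordRing) ∧
    (∀ h ∈ D.uCoordRing, ∀ h' ∈ D.uCoordRing, h + h' ∈ D.uCoordRing) ∧
    (∀ h ∈ D.uCoordRing, ∀ c : F, c • h ∈ D.uCoordRing) ∧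
    (∀ h ∈ D.uCoordRing, ∀ h' ∈ D.uCoordRing,
      (TensorProduct.dualDistrib F (UniversalEnvelopingAlgebra F g)
        (UniversalEnvelopingAlgebra F g) (h ⊗ₜ[F] h')) ∘ₗ Δ.toLinearMap ∈ D.uCoordRing) ∧
    -- ... invariant under the `U(g)ᵒᵖ ⊗ U(g)`-action `h ↦ (x ↦ h (a x b))`:
    (∀ (a b : UniversalEnvelopingAlgebra F g), ∀ h ∈ D.uCoordRing,
      h ∘ₗ ((LinearMap.mulLeft F a) ∘ₗ (LinearMap.mulRight F b)) ∈ D.uCoordRing) ∧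
    -- (b) the `U(g)ᵒᵖ ⊗ U(g)`-equivariant algebra isomorphism `Ψ : F[M] → F[U(g)]`:
    (D.Good →
      ∃ Ψ : {f : ↥D.M → F // f ∈ D.coordRing} →
          Module.Dual F (UniversalEnvelopingAlgebra F g),
        (∀ f, Ψ f ∈ D.uCoordRing) ∧
        (∀ h ∈ D.uCoordRing, ∃ f, Ψ f = h) ∧
        Function.Injective Ψ ∧
        (∀ (i : D.ι) (φ : Module.Dual F (D.V i)) (v : D.V i) (hφ : φ ∈ D.du i),
          Ψ ⟨D.matCoef i φ v, ⟨i, φ, v, hφ, rfl⟩⟩ = D.uMatCoef i φ v) ∧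
        (∀ f h (hs : f.1 + h.1 ∈ D.coordRing), Ψ ⟨f.1 + h.1, hs⟩ = Ψ f + Ψ h) ∧
        (∀ (c : F) f (hs : c • f.1 ∈ D.coordRing), Ψ ⟨c • f.1, hs⟩ = c • Ψ f) ∧
        (∀ f h (hs : f.1 * h.1 ∈ D.coordRing),
          Ψ ⟨f.1 * h.1, hs⟩ =
            (TensorProduct.dualDistrib F (UniversalEnvelopingAlgebra F g)
              (UniversalEnvelopingAlgebra F g) ((Ψ f) ⊗ₜ[F] (Ψ h))) ∘ₗ Δ.toLinearMap) ∧
        (∀ (hone : (1 : ↥D.M → F) ∈ D.coordRing), Ψ ⟨1, hone⟩ = ε.toLinearMap) ∧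
        (∀ (a b : UniversalEnvelopingAlgebra F g) (i : D.ι) (φ : Module.Dual F (D.V i))
            (v : D.V i) (hφ : φ ∈ D.du i) (hφ' : (D.uact i a).dualMap φ ∈ D.du i),
          Ψ ⟨D.matCoef i ((D.uact i a).dualMap φ) (D.uact i b v),
              ⟨i, (D.uact i a).dualMap φ, D.uact i b v, hφ', rfl⟩⟩ =
            (D.uMatCoef i φ v) ∘ₗ ((LinearMap.mulLeft F a) ∘ₗ (LinearMap.mulRight F b)))) := by
  classical
  obtain ⟨i₀, φ₀, v₀, hφ₀, hmat₀, heq₀⟩ := D.aux_eps HG ε hε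
  refine ⟨⟨i₀, φ₀, v₀, hφ₀, heq₀.symm⟩, ?_, ?_, ?_, ?_, ?_⟩
  · rintro h ⟨i, φ, v, hφ, rfl⟩ h' ⟨j, ψ, w, hψ, rfl⟩
    obtain ⟨k, e, he⟩ := HG.exists_sum i j
    exact ⟨k, _, e.symm (v, w), (HG.du_sum i j k e he _).mpr ⟨φ, hφ, ψ, hψ, rfl⟩,
      (D.aux_sum_mat he φ ψ v w).2.symm⟩
  · rintro h ⟨i, φ, v, hφ, rfl⟩ c
    refine ⟨i, c • φ, v, (D.du i).smul_mem c hφ, ?_⟩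
    ext a
    show c • φ (D.uact i a v) = (c • φ) (D.uact i a v)
    simp
  · rintro h ⟨i, φ, v, hφ, rfl⟩ h' ⟨j, ψ, w, hψ, rfl⟩
    obtain ⟨k, e, he⟩ := HG.exists_tensor i j
    exact ⟨k, _, e.symm (v ⊗ₜ[F] w), HG.du_tensor i j k e he φ hφ ψ hψ,
      (D.aux_tensor_mat Δ hΔ he φ ψ v w).2.symm⟩
  · rintro a b h ⟨i, φ, v, hφ, rfl⟩
    exact ⟨i, (D.uact i a).dualMap φ, D.uact i b v, D.aux_uact_du HG i a φ hφ,
      (D.aux_equiv i φ v a b).symm⟩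
  · intro HGood
    have pick : ∀ f : {f : ↥D.M → F // f ∈ D.coordRing},
        ∃ p : Σ i : D.ι, Module.Dual F (D.V i) × D.V i,
          p.2.1 ∈ D.du p.1 ∧ f.1 = D.matCoef p.1 p.2.1 p.2.2 := by
      rintro ⟨f, i, φ, v, hφ, rfl⟩
      exact ⟨⟨i, (φ, v)⟩, hφ, rfl⟩
    choose p hp1 hp2 using pick
    refine ⟨fun f => D.uMatCoef (p f).1 (p f).2.1 (p f).2.2, ?_, ?_, ?_, ?_, ?_, ?_, ?_, ?_, ?_⟩
    · exact fun f => ⟨(p f).1, (p f).2.1, (p f).2.2, hp1 f, rfl⟩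
    · rintro h ⟨i, φ, v, hφ, rfl⟩
      refine ⟨⟨D.matCoef i φ v, ⟨i, φ, v, hφ, rfl⟩⟩, ?_⟩
      exact D.aux_key HGood (hp1 _) hφ (hp2 _).symm
    · intro f h hfh
      apply Subtype.ext
      rw [hp2 f, hp2 h]
      exact D.aux_inj HG hfh
    · intro i φ v hφ
      exact D.aux_key HGood (hp1 _) hφ (hp2 _).symm
    · intro f h hs
      beta_reduce
      obtain ⟨k, e, he⟩ := HG.exists_sum (p f).1 (p h).1
      have h1 := D.aux_sum_mat he (p f).2.1 (p h).2.1 (p f).2.2 (p h).2.2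
      have h2 : (⟨f.1 + h.1, hs⟩ : {f : ↥D.M → F // f ∈ D.coordRing}).1
          = D.matCoef k
            (e.toLinearMap.dualMap
              ((LinearMap.fst F (D.V (p f).1) (D.V (p h).1)).dualMap (p f).2.1 +
               (LinearMap.snd F (D.V (p f).1) (D.V (p h).1)).dualMap (p h).2.1))
            (e.symm ((p f).2.2, (p h).2.2)) := by
        show f.1 + h.1 = _
        rw [hp2 f, hp2 h, ← h1.1]
      rw [D.aux_key HGood (hp1 _)
        ((HG.du_sum _ _ k e he _).mpr ⟨_, hp1 f, _, hp1 h, rfl⟩)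
        (((hp2 _).symm.trans h2))]
      exact h1.2
    · intro c f hs
      beta_reduce
      have h2 : (⟨c • f.1, hs⟩ : {f : ↥D.M → F // f ∈ D.coordRing}).1
          = D.matCoef (p f).1 (c • (p f).2.1) (p f).2.2 := by
        show c • f.1 = _
        rw [hp2 f]
        funext m
        show c • ((p f).2.1 ((m.1 (p f).1) (p f).2.2)) = (c • (p f).2.1) _
        simp
      rw [D.aux_key HGood (hp1 _) ((D.du _).smul_mem c (hp1 f)) (((hp2 _).symm.trans h2))]
      ext a
      show (c • (p f).2.1) (D.uact (p f).1 a (p f).2.2) = c • ((p f).2.1 (D.uact (p f).1 a (p f).2.2))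
      simp
    · intro f h hs
      beta_reduce
      obtain ⟨k, e, he⟩ := HG.exists_tensor (p f).1 (p h).1
      have h1 := D.aux_tensor_mat Δ hΔ he (p f).2.1 (p h).2.1 (p f).2.2 (p h).2.2
      have h2 : (⟨f.1 * h.1, hs⟩ : {f : ↥D.M → F // f ∈ D.coordRing}).1
          = D.matCoef k (e.toLinearMap.dualMap (D.tensorDual (p f).2.1 (p h).2.1))
            (e.symm ((p f).2.2 ⊗ₜ[F] (p h).2.2)) := by
        show f.1 * h.1 = _
        rw [hp2 f, hp2 h, ← h1.1]
      rw [D.aux_key HGood (hp1 _)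
        (HG.du_tensor _ _ k e he _ (hp1 f) _ (hp1 h))
        (((hp2 _).symm.trans h2))]
      exact h1.2
    · intro hone
      beta_reduce
      have h2 : (⟨1, hone⟩ : {f : ↥D.M → F // f ∈ D.coordRing}).1
          = D.matCoef i₀ φ₀ v₀ := by
        show (1 : ↥D.M → F) = _
        funext m
        exact (hmat₀ m).symm
      rw [D.aux_key HGood (hp1 _) hφ₀ (((hp2 _).symm.trans h2))]
      exact heq₀
    · intro a b i φ v hφ hφ'
      beta_reduce
      rw [D.aux_key HGood (hp1 _) hφ' (hp2 _).symm]
      exact D.aux_equiv i φ v a b
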